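/- Let M be a symmetric real n×n matrix all of whose entries lie in {0,1}, and let s be a natural number. Then the following are equivalent: (i) there exist positive integers c_1, …, c_s and a bijection e from the disjoint union ⨿_{i=1}^s {1,…,c_i} to {1,…,n} such that reindexing M along e yields the direct sum of the all-ones blocks J_{c_1}, …, J_{c_s}; (ii) every diagonal entry of M equals 1, the rank of M equals s, and M is positive semidefinite. -/

import Mathlib

open Matrix in
lemma key_lemma {n : ℕ} {ι : Type} [Fintype ι] [DecidableEq ι] (f : Fin n → ι)
    (hf : Function.Surjective f) (M : Matrix (Fin n) (Fin n) ℝ)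
    (hM : ∀ u v, M u v = if f u = f v then 1 else 0) :
    M.rank = Fintype.card ι ∧ M.PosSemidef := by
  classical
  set B : Matrix ι (Fin n) ℝ := Matrix.of fun i v => if f v = i then 1 else 0 with hB
  have hMB : M = Bᵀ * B := by
    ext u v
    rw [hM u v]
    simp only [Matrix.mul_apply, Matrix.transpose_apply, hB, Matrix.of_apply,
      ite_mul, mul_ite, mul_one, mul_zero, zero_mul]
    rw [Finset.sum_eq_single (f u)]
    · simp [eq_comm]
    · intro b _ hb; simp [Ne.symm hb]
    · simp
  have hBBT : B * Bᵀ = Matrix.diagonal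
      (fun i => ((Finset.univ.filter (fun v => f v = i)).card : ℝ)) := by
    ext i j
    simp only [Matrix.mul_apply, Matrix.transpose_apply, hB, Matrix.of_apply,
      ite_mul, mul_ite, mul_one, mul_zero, zero_mul]
    by_cases hij : i = j
    · subst hij
      rw [Matrix.diagonal_apply_eq]
      have h' : ∀ x : Fin n, (if f x = i then (if f x = i then (1:ℝ) else 0) else 0)
          = if f x = i then 1 else 0 := fun x => by by_cases h : f x = i <;> simp [h]
      simp only [h']
      rw [Finset.sum_boole]
    · rw [Matrix.diagonal_apply_ne _ hij]
      apply Finset.sum_eq_zero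
      intro v _
      by_cases h1 : f v = i
      · have h2 : f v ≠ j := fun h => hij (h1.symm.trans h)
        simp [h1, h2, hij]
      · simp [h1]
  have hunit : IsUnit (B * Bᵀ) := by
    rw [hBBT, Matrix.isUnit_iff_isUnit_det, Matrix.det_diagonal]
    refine isUnit_iff_ne_zero.mpr (Finset.prod_ne_zero_iff.mpr fun i _ => ?_)
    have : (Finset.univ.filter (fun v => f v = i)).Nonempty := by
      obtain ⟨v, hv⟩ := hf i
      exact ⟨v, by simp [hv]⟩
    exact_mod_cast Finset.card_ne_zero_of_mem this.choose_spec
  have hrB : B.rank = Fintype.card ι := by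
    refine le_antisymm (Matrix.rank_le_card_height B) ?_
    calc (Fintype.card ι : ℕ) = (B * Bᵀ).rank := (Matrix.rank_of_isUnit _ hunit).symm
      _ ≤ B.rank := Matrix.rank_mul_le_left B Bᵀ
  constructor
  · rw [hMB, Matrix.rank_transpose_mul_self, hrB]
  · have : Bᵀ = Bᴴ := by ext i j; simp [Matrix.conjTranspose_apply]
    rw [hMB, this]
    exact Matrix.posSemidef_conjTranspose_mul_self B

/-- For a symmetric real `n × n` matrix `M` with entries in `{0,1}` and a
natural number `s`, the following are equivalent:
(i) there are positive integers `c 1, …, c s` and a bijection `e` from the disjoint union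
`⨿ i, Fin (c i)` to `Fin n` along which `M` is the direct sum of the all-ones blocks
`J_{c 1}, …, J_{c s}`;
(ii) every diagonal entry of `M` is `1`, `rank M = s`, and `M` is positive semidefinite. -/
theorem zero_one_matrix_direct_sum_iff
    (n : ℕ) (M : Matrix (Fin n) (Fin n) ℝ) (hsymm : M.IsSymm)
    (h01 : ∀ u v : Fin n, M u v = 0 ∨ M u v = 1) (s : ℕ) :
    (∃ c : Fin s → ℕ, (∀ i, 0 < c i) ∧
      ∃ e : (Σ i : Fin s, Fin (c i)) ≃ Fin n,
        ∀ x y : (Σ i : Fin s, Fin (c i)),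
          M (e x) (e y) = if x.1 = y.1 then 1 else 0) ↔
    ((∀ v : Fin n, M v v = 1) ∧ M.rank = s ∧ M.PosSemidef) := by
  constructor
  · rintro ⟨c, hc, e, he⟩
    have hMf : ∀ u v : Fin n, M u v =
        if (e.symm u).1 = (e.symm v).1 then 1 else 0 := by
      intro u v
      have := he (e.symm u) (e.symm v)
      rwa [e.apply_symm_apply, e.apply_symm_apply] at this
    have hfs : Function.Surjective (fun v : Fin n => (e.symm v).1) := by
      intro i
      exact ⟨e ⟨i, ⟨0, hc i⟩⟩, by simp⟩
    obtain ⟨h1, h2⟩ := key_lemma _ hfs M hMf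
    exact ⟨fun v => by rw [hMf v v]; simp, by rwa [Fintype.card_fin] at h1, h2⟩
  · rintro ⟨hdiag, hrank, hpsd⟩
    classical
    have htrans : ∀ u v w : Fin n, M u v = 1 → M v w = 1 → M u w = 1 := by
      intro u v w huv hvw
      rcases h01 u w with h0 | h1
      · exfalso
        have hvu : M v u = 1 := (hsymm.apply u v).trans huv
        have hwv : M w v = 1 := (hsymm.apply v w).trans hvw
        have hwu : M w u = 0 := (hsymm.apply u w).trans h0
        have hx := hpsd.dotProduct_mulVec_nonneg (Pi.single u (1:ℝ) - Pi.single v 1 + Pi.single w 1 : Fin n → ℝ)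
        simp only [star_trivial, Matrix.mulVec_add, Matrix.mulVec_sub,
          Matrix.mulVec_single, dotProduct_add, dotProduct_sub,
          add_dotProduct, sub_dotProduct, single_dotProduct,
          MulOpposite.op_one, one_smul, Matrix.col_apply,
          mul_one, one_mul, hdiag, huv, hvw, hvu, hwv, hwu, h0] at hx
        norm_num at hx
      · exact h1
    let st : Setoid (Fin n) := ⟨fun u v => M u v = 1,
      ⟨fun u => hdiag u, fun {u v} h => (hsymm.apply u v).trans h,
       fun {u v w} h h' => htrans u v w h h'⟩⟩
    have hM0 : ∀ u v : Fin n, M u v =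
        if (Quotient.mk st u) = (Quotient.mk st v) then 1 else 0 := by
      intro u v
      by_cases h : Quotient.mk st u = Quotient.mk st v
      · have h' : M u v = 1 := Quotient.exact h
        simpa [h] using h'
      · simp only [h, if_neg]
        rcases h01 u v with h0 | h1
        · simpa
        · exact absurd (Quotient.sound (h1 : st.r u v)) h
    obtain ⟨hrk, _⟩ := key_lemma (Quotient.mk st) Quotient.mk_surjective
      M hM0
    have hcard : Fintype.card (Quotient st) = s := by rw [← hrk, hrank]
    let eqv : Quotient st ≃ Fin s := Fintype.equivFinOfCardEq hcard
    set f : Fin n → Fin s := fun v => eqv (Quotient.mk st v) with hf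
    have hfs : Function.Surjective f :=
      eqv.surjective.comp Quotient.mk_surjective
    have hMf : ∀ u v : Fin n, M u v = if f u = f v then 1 else 0 := by
      intro u v
      rw [hM0 u v]
      congr 1
      simp [hf, eqv.apply_eq_iff_eq]
    refine ⟨fun i => Fintype.card {v : Fin n // f v = i}, fun i => ?_, ?_⟩
    · obtain ⟨v, hv⟩ := hfs i
      exact Fintype.card_pos_iff.mpr ⟨⟨v, hv⟩⟩
    · refine ⟨(Equiv.sigmaCongrRight fun i =>
        (Fintype.equivFin {v : Fin n // f v = i}).symm).trans
        (Equiv.sigmaFiberEquiv f), fun x y => ?_⟩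
      have key : ∀ z : (Σ i : Fin s, Fin (Fintype.card {v : Fin n // f v = i})),
          f (((Equiv.sigmaCongrRight fun i =>
            (Fintype.equivFin {v : Fin n // f v = i}).symm).trans
            (Equiv.sigmaFiberEquiv f)) z) = z.1 := by
        rintro ⟨i, a⟩
        exact ((Fintype.equivFin {v : Fin n // f v = i}).symm a).2
      rw [hMf, key x, key y]
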